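/- Let Σ_Γ be a subshift of finite type without isolated points or empty cones and let f : E → Σ_Γ be a nondegenerate map. Then for every finite directed path β, the set {α : C_α ⊆ E and f̄(α) = β} is finite. If moreover f is rational and injective with exactly k distinct local actions, then this set has at most k elements. -/

import Mathlib

open scoped Classical

noncomputable section

/-- A finite directed graph (loops and parallel edges are allowed). -/
structure FinDigraph : Type 1 where
  V : Type
  E : Type
  [fintypeV : Fintype V]
  [fintypeE : Fintype E]
  o : E → V
  t : E → V

attribute [instance] FinDigraph.fintypeV FinDigraph.fintypeE

instance (Γ : FinDigraph) : TopologicalSpace Γ.E := ⊥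
instance (Γ : FinDigraph) : DiscreteTopology Γ.E := ⟨rfl⟩

namespace FinDigraph

variable (Γ : FinDigraph)

/-- The subshift of finite type `Σ_Γ`: the set of all infinite directed paths in `Γ`,
viewed as a subset of the product space of all edge sequences (each edge's terminus is
the origin of the next edge). -/
def shift : Set (ℕ → Γ.E) := {x | ∀ i, Γ.t (x i) = Γ.o (x (i + 1))}

/-- Validity of a finite directed path starting at a given node. -/
def pathOk : Γ.V → List Γ.E → Prop
  | _, [] => True
  | v, e :: l => Γ.o e = v ∧ pathOk (Γ.t e) l

/-- A finite directed path in `Γ` (a node together with a compatible list of edges;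
a path with no edges is a node, regarded as a path of length `0`). -/
structure FinPath where
  start : Γ.V
  edges : List Γ.E
  ok : Γ.pathOk start edges

/-- Terminus of a list of edges starting at a given node. -/
def pathEndAux : Γ.V → List Γ.E → Γ.V
  | v, [] => v
  | _, e :: l => pathEndAux (Γ.t e) l

/-- The terminus `t(α)` of a finite directed path. -/
def pathEnd (α : Γ.FinPath) : Γ.V := Γ.pathEndAux α.start α.edges

/-- The length-0 path at a node `v`. -/
def trivPath (v : Γ.V) : Γ.FinPath := ⟨v, [], by simp [pathOk]⟩

/-- The cone `C_α ⊆ Σ_Γ` of all infinite directed paths having `α` as a prefix. -/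
def cone (α : Γ.FinPath) : Set (ℕ → Γ.E) :=
  {x | x ∈ Γ.shift ∧ Γ.o (x 0) = α.start ∧
    ∀ (i : ℕ) (h : i < α.edges.length), x i = α.edges.get ⟨i, h⟩}

/-- The canonical similarity `C_α → C_β` (for `t(α) = t(β)`) on the level of edge
sequences: delete the prefix `α` and attach the prefix `β`. -/
def splice (α β : Γ.FinPath) (x : ℕ → Γ.E) : ℕ → Γ.E := fun i =>
  if h : i < β.edges.length then β.edges.get ⟨i, h⟩
  else x (i - β.edges.length + α.edges.length)

/-- Concatenation `α · ω` of a finite path with an infinite path (on sequences). -/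
def catPath (α : Γ.FinPath) (x : ℕ → Γ.E) : ℕ → Γ.E :=
  Γ.splice (Γ.trivPath (Γ.pathEnd α)) α x

/-- The length of the path `f̄(α)`, i.e. of the greatest common prefix of all points
of `f(C_α)`. -/
def barLen (f : (ℕ → Γ.E) → ℕ → Γ.E) (α : Γ.FinPath) : ℕ :=
  sSup {n | ∀ x ∈ Γ.cone α, ∀ y ∈ Γ.cone α, ∀ i < n, f x i = f y i}

/-- The local action `f|_α : C_{t(α)} → C_{t(f̄(α))}`, determined by
`f(α·ω) = f̄(α)·(f|_α)(ω)`.  It is recorded together with the node `t(α)`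
(the node of its domain cone), and is extended by the identity off the cone
`C_{t(α)}`. -/
def localAction (f : (ℕ → Γ.E) → ℕ → Γ.E) (α : Γ.FinPath) :
    Γ.V × ((ℕ → Γ.E) → ℕ → Γ.E) :=
  (Γ.pathEnd α, fun w =>
    if w ∈ Γ.cone (Γ.trivPath (Γ.pathEnd α)) then
      fun i => f (Γ.catPath α w) (i + Γ.barLen f α)
    else w)

/-- A map is rational (on a domain `D`) if it has only finitely many distinct local
actions at cones contained in `D`. -/
def RationalOn (f : (ℕ → Γ.E) → ℕ → Γ.E) (D : Set (ℕ → Γ.E)) : Prop :=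
  (Γ.localAction f '' {α : Γ.FinPath | Γ.cone α ⊆ D}).Finite

/-- The nucleus `𝒩_f` of a map: the set of local actions `f|_α` that occur for
infinitely many finite paths `α` with `C_α` contained in the domain. -/
def nucleusOf (f : (ℕ → Γ.E) → ℕ → Γ.E) (D : Set (ℕ → Γ.E)) :
    Set (Γ.V × ((ℕ → Γ.E) → ℕ → Γ.E)) :=
  {p | {α : Γ.FinPath | Γ.cone α ⊆ D ∧ Γ.localAction f α = p}.Infinite}

/-- A nondegenerate map on `Σ_Γ` with domain `D`: it takes values in `Σ_Γ` and maps no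
cone contained in `D` to a single point. -/
def Nondegenerate (f : (ℕ → Γ.E) → ℕ → Γ.E) (D : Set (ℕ → Γ.E)) : Prop :=
  (∀ x ∈ D, f x ∈ Γ.shift) ∧
  ∀ α : Γ.FinPath, Γ.cone α ⊆ D → ¬∃ p, ∀ x ∈ Γ.cone α, f x = p

/-- Extension of a map `E → E'` between subsets of the sequence space to a globally
defined map (by the identity off `E`). -/
def homExt (E E' : Set (ℕ → Γ.E)) (f : ↥E → ↥E') : (ℕ → Γ.E) → ℕ → Γ.E :=
  fun x => if h : x ∈ E then ↑(f ⟨x, h⟩) else x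

/-- Extension of a permutation of `E` to a globally defined map. -/
def permExt (E : Set (ℕ → Γ.E)) (g : Equiv.Perm ↥E) : (ℕ → Γ.E) → ℕ → Γ.E :=
  Γ.homExt E E ⇑g

/-- `E` is a clopen subset of the subshift `Σ_Γ`. -/
def ClopenIn (E : Set (ℕ → Γ.E)) : Prop :=
  IsClopen {x : ↥Γ.shift | (x : ℕ → Γ.E) ∈ E}

/-- `U ⊆ Σ_Γ` is open in the subshift. -/
def OpenInShift (U : Set (ℕ → Γ.E)) : Prop :=
  IsOpen {x : ↥Γ.shift | (x : ℕ → Γ.E) ∈ U}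

/-- The subshift `Σ_Γ` has no isolated points. -/
def NoIsolatedPoints : Prop := ∀ x : ↥Γ.shift, ¬IsOpen ({x} : Set ↥Γ.shift)

/-- The subshift `Σ_Γ` has no empty cones. -/
def NoEmptyCones : Prop := ∀ α : Γ.FinPath, (Γ.cone α).Nonempty

/-- A permutation of `E` which is a homeomorphism and is a rational map:
an element of the rational group `R_{Γ,E}`. -/
def IsRatHomeo (E : Set (ℕ → Γ.E)) (g : Equiv.Perm ↥E) : Prop :=
  Continuous ⇑g ∧ Continuous ⇑g.symm ∧ Γ.RationalOn (Γ.permExt E g) E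

/-- `g` maps the cone `C_α` to the cone `C_β` by the canonical similarity
`α·ω ↦ β·ω`. -/
def RealizesCanonSim (E : Set (ℕ → Γ.E)) (g : Equiv.Perm ↥E) (α β : Γ.FinPath) : Prop :=
  ∀ x, ∀ hx : x ∈ E, x ∈ Γ.cone α → ↑(g ⟨x, hx⟩) = Γ.splice α β x

/-- A rational similarity group (RSG): a subgroup of the rational group `R_{Γ,E}` that
realizes the canonical similarity between any two cones `C_α, C_β ⊊ E` with
`t(α) = t(β)`. -/
def IsRSG (E : Set (ℕ → Γ.E)) (G : Subgroup (Equiv.Perm ↥E)) : Prop :=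
  (∀ g ∈ G, Γ.IsRatHomeo E g) ∧
  ∀ α β : Γ.FinPath, Γ.pathEnd α = Γ.pathEnd β → Γ.cone α ⊂ E → Γ.cone β ⊂ E →
    ∃ g ∈ G, Γ.RealizesCanonSim E g α β

/-- `h` locally agrees with the group `G`: every point has an open neighborhood on
which `h` coincides with some element of `G`. -/
def LocallyAgrees (E : Set (ℕ → Γ.E)) (G : Subgroup (Equiv.Perm ↥E))
    (h : Equiv.Perm ↥E) : Prop :=
  ∀ x : ↥E, ∃ U : Set ↥E, IsOpen U ∧ x ∈ U ∧ ∃ g ∈ G, ∀ u ∈ U, h u = g u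

/-- `G` is full as a group of homeomorphisms of `E`: every homeomorphism of `E` that
locally agrees with `G` already belongs to `G`. -/
def IsFullOn (E : Set (ℕ → Γ.E)) (G : Subgroup (Equiv.Perm ↥E)) : Prop :=
  ∀ h : Equiv.Perm ↥E, Continuous ⇑h → Continuous ⇑h.symm →
    Γ.LocallyAgrees E G h → h ∈ G

/-- The nucleus `𝒩_G` of a subgroup `G ≤ R_{Γ,E}`: the union of the nuclei of its
elements. -/
def groupNucleus (E : Set (ℕ → Γ.E)) (G : Subgroup (Equiv.Perm ↥E)) :
    Set (Γ.V × ((ℕ → Γ.E) → ℕ → Γ.E)) :=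
  ⋃ g ∈ G, Γ.nucleusOf (Γ.permExt E g) E

/-- An edge of the induced subgraph on a set `W` of nodes. -/
def InducedEdge (W : Set Γ.V) (e : Γ.E) : Prop := Γ.o e ∈ W ∧ Γ.t e ∈ W

/-- A path of the induced subgraph on `W`. -/
def PathIn (W : Set Γ.V) (α : Γ.FinPath) : Prop :=
  α.start ∈ W ∧ ∀ e ∈ α.edges, Γ.InducedEdge W e

/-- The induced subgraph on `W` is strongly connected and is not a directed cycle,
i.e. `Σ_{Γ₀}` is irreducible (where `Γ₀` is the induced subgraph on `W`). -/
def IrreducibleOn (W : Set Γ.V) : Prop :=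
  (∀ v ∈ W, ∀ w ∈ W, ∃ α : Γ.FinPath,
      α.start = v ∧ Γ.pathEnd α = w ∧ α.edges ≠ [] ∧ Γ.PathIn W α) ∧
  ¬∀ v ∈ W, ∃! e : Γ.E, Γ.InducedEdge W e ∧ Γ.o e = v

/-- `Σ_Γ` has an irreducible core: an induced subgraph `Γ₀` (on a node set `W`) with
`Σ_{Γ₀}` irreducible, such that every node has a directed path to `Γ₀` and every
sufficiently long directed path ends in `Γ₀`. -/
def HasIrreducibleCore : Prop :=
  ∃ W : Set Γ.V, Γ.IrreducibleOn W ∧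
    (∀ v : Γ.V, ∃ α : Γ.FinPath, α.start = v ∧ Γ.pathEnd α ∈ W) ∧
    ∃ N : ℕ, ∀ α : Γ.FinPath, α.edges.length = N → Γ.pathEnd α ∈ W

/-- `G ≤ R_{Γ,E}` is contracting: `Σ_Γ` has an irreducible core and the nucleus `𝒩_G`
is finite. -/
def IsContracting (E : Set (ℕ → Γ.E)) (G : Subgroup (Equiv.Perm ↥E)) : Prop :=
  Γ.HasIrreducibleCore ∧ (Γ.groupNucleus E G).Finite

/-- An element of the Thompson group `V_{Γ,E}`: there are partitions of `E` into cones
`C_{α_1},…,C_{α_k}` and `C_{β_1},…,C_{β_k}` with `t(α_i) = t(β_i)` such that `g` maps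
each `C_{α_i}` to `C_{β_i}` by the canonical similarity. -/
def IsThompson (E : Set (ℕ → Γ.E)) (g : Equiv.Perm ↥E) : Prop :=
  ∃ (k : ℕ) (α β : Fin k → Γ.FinPath),
    (∀ i, Γ.pathEnd (α i) = Γ.pathEnd (β i)) ∧
    E = (⋃ i, Γ.cone (α i)) ∧
    Pairwise (fun i j => Disjoint (Γ.cone (α i)) (Γ.cone (α j))) ∧
    E = (⋃ i, Γ.cone (β i)) ∧
    Pairwise (fun i j => Disjoint (Γ.cone (β i)) (Γ.cone (β j))) ∧
    ∀ i, Γ.RealizesCanonSim E g (α i) (β i)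

/-- A rational (eventually repeating) point `σ·τ^∞` of `Σ_Γ`. -/
def IsRationalPt (x : ℕ → Γ.E) : Prop :=
  ∃ σ τ : Γ.FinPath, τ.edges ≠ [] ∧
    (∀ (i : ℕ) (h : i < σ.edges.length), x i = σ.edges.get ⟨i, h⟩) ∧
    ∀ i : ℕ, σ.edges.length ≤ i →
      ∀ h : (i - σ.edges.length) % τ.edges.length < τ.edges.length,
        x i = τ.edges.get ⟨(i - σ.edges.length) % τ.edges.length, h⟩

/-- `β = f̄(α)`: the cone `C_β` is the smallest cone containing `f(C_α)`, with `β` the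
greatest common prefix of the points of `f(C_α)`. -/
def IsBar (f : (ℕ → Γ.E) → ℕ → Γ.E) (α β : Γ.FinPath) : Prop :=
  f '' Γ.cone α ⊆ Γ.cone β ∧
  ∀ γ : Γ.FinPath, f '' Γ.cone α ⊆ Γ.cone γ →
    Γ.cone β ⊆ Γ.cone γ ∧ γ.edges.length ≤ β.edges.length

end FinDigraph

namespace BFT

variable {Γ : FinDigraph}

lemma finpath_ext {α α' : Γ.FinPath} (h1 : α.start = α'.start)
    (h2 : α.edges = α'.edges) : α = α' := by
  cases α; cases α'; cases h1; cases h2; rfl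

lemma pathOk_cons {v : Γ.V} {e : Γ.E} {l : List Γ.E} (h : Γ.pathOk v (e :: l)) :
    Γ.o e = v ∧ Γ.pathOk (Γ.t e) l := h

lemma pathOk_ofFn {z : ℕ → Γ.E} (hz : z ∈ Γ.shift) :
    ∀ (n j : ℕ), Γ.pathOk (Γ.o (z j)) (List.ofFn fun i : Fin n => z (j + i)) := by
  intro n
  induction n with
  | zero => intro j; simp [FinDigraph.pathOk]
  | succ n ih =>
    intro j
    rw [List.ofFn_succ]
    refine ⟨by norm_num, ?_⟩
    have h2 : (List.ofFn fun i : Fin n => z (j + ↑i.succ)) =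
        List.ofFn fun i : Fin n => z (j + 1 + ↑i) := by
      congr 1; funext i; congr 1; simp [Fin.val_succ]; omega
    have h3 : Γ.t (z (j + ↑(0 : Fin (n+1)))) = Γ.o (z (j + 1)) := by
      simpa using hz j
    rw [h2, h3]
    exact ih (j + 1)

lemma pathOk_head {l : List Γ.E} {v : Γ.V} (hl : Γ.pathOk v l) (h : 0 < l.length) :
    Γ.o (l.get ⟨0, h⟩) = v := by
  match l, hl with
  | e :: l, hl => exact hl.1

lemma pathOk_chain : ∀ (l : List Γ.E) (v : Γ.V), Γ.pathOk v l →
    ∀ i (h : i + 1 < l.length),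
    Γ.t (l.get ⟨i, by omega⟩) = Γ.o (l.get ⟨i + 1, h⟩) := by
  intro l
  induction l with
  | nil => intro v _ i h; simp at h
  | cons e l ih =>
    intro v hv i h
    obtain ⟨h1, h2⟩ := pathOk_cons hv
    match i with
    | 0 =>
      have hl : 0 < l.length := by simpa using h
      exact (pathOk_head h2 hl).symm
    | Nat.succ i =>
      exact ih (Γ.t e) h2 i (by simpa using h)

lemma pathOk_last : ∀ (l : List Γ.E) (v : Γ.V), Γ.pathOk v l → ∀ (h : 0 < l.length),
    Γ.t (l.get ⟨l.length - 1, by omega⟩) = Γ.pathEndAux v l := by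
  intro l
  induction l with
  | nil => intro v _ h; simp at h
  | cons e l ih =>
    intro v hv _
    obtain ⟨h1, h2⟩ := pathOk_cons hv
    match l, h2 with
    | [], _ => rfl
    | e' :: l', h2 =>
      have := ih _ h2 (by simp)
      simpa [FinDigraph.pathEndAux] using this

lemma catPath_apply (α : Γ.FinPath) (ω : ℕ → Γ.E) (i : ℕ) :
    Γ.catPath α ω i =
      if h : i < α.edges.length then α.edges.get ⟨i, h⟩
      else ω (i - α.edges.length) := by
  simp [FinDigraph.catPath, FinDigraph.splice, FinDigraph.trivPath]

lemma pathEnd_of_nil {α : Γ.FinPath} (h : α.edges = []) : Γ.pathEnd α = α.start := by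
  unfold FinDigraph.pathEnd
  rw [h]
  rfl

lemma catPath_mem_cone (α : Γ.FinPath) {ω : ℕ → Γ.E}
    (hω : ω ∈ Γ.cone (Γ.trivPath (Γ.pathEnd α))) : Γ.catPath α ω ∈ Γ.cone α := by
  obtain ⟨hsh, h0, -⟩ := hω
  refine ⟨?_, ?_, ?_⟩
  · intro i
    rw [catPath_apply, catPath_apply]
    rcases lt_trichotomy (i + 1) α.edges.length with h | h | h
    · rw [dif_pos (by omega), dif_pos h]
      exact pathOk_chain _ _ α.ok i h
    · rw [dif_pos (by omega), dif_neg (by omega)]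
      have h1 : i + 1 - α.edges.length = 0 := by omega
      have hi : i = α.edges.length - 1 := by omega
      subst hi
      rw [h1, h0]
      exact pathOk_last α.edges α.start α.ok (by omega)
    · rw [dif_neg (by omega), dif_neg (by omega)]
      have h2 : i + 1 - α.edges.length = (i - α.edges.length) + 1 := by omega
      rw [h2]
      exact hsh _
  · rw [catPath_apply]
    by_cases h : 0 < α.edges.length
    · rw [dif_pos h]
      exact pathOk_head α.ok h
    · rw [dif_neg (by omega)]
      have hnil : α.edges = [] := List.length_eq_zero_iff.mp (by omega)
      simpa [hnil, FinDigraph.trivPath, pathEnd_of_nil hnil] using h0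
  · intro i h
    rw [catPath_apply, dif_pos h]

lemma exists_ne (hcones : Γ.NoEmptyCones) {f : (ℕ → Γ.E) → ℕ → Γ.E}
    {E : Set (ℕ → Γ.E)} (hf : Γ.Nondegenerate f E) {α : Γ.FinPath}
    (hα : Γ.cone α ⊆ E) :
    ∃ x ∈ Γ.cone α, ∃ y ∈ Γ.cone α, ∃ j, f x j ≠ f y j := by
  obtain ⟨x, hx⟩ := hcones α
  have h := hf.2 α hα
  push_neg at h
  obtain ⟨y, hy, hne⟩ := h (f x)
  obtain ⟨j, hj⟩ := Function.ne_iff.mp hne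
  exact ⟨y, hy, x, hx, j, hj⟩

lemma barLen_eq (hcones : Γ.NoEmptyCones) {f : (ℕ → Γ.E) → ℕ → Γ.E}
    {E : Set (ℕ → Γ.E)} (hf : Γ.Nondegenerate f E)
    {α β : Γ.FinPath} (hα : Γ.cone α ⊆ E) (hb : Γ.IsBar f α β) :
    Γ.barLen f α = β.edges.length := by
  set A := {n : ℕ | ∀ x ∈ Γ.cone α, ∀ y ∈ Γ.cone α, ∀ i < n, f x i = f y i} with hA
  have hbl : Γ.barLen f α = sSup A := rfl
  obtain ⟨x, hx, y, hy, j, hj⟩ := exists_ne hcones hf hα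
  have hbdd : BddAbove A := by
    refine ⟨j, fun n hn => ?_⟩
    by_contra hc
    exact hj (hn x hx y hy j (by omega))
  have hmemβ : β.edges.length ∈ A := by
    intro x hx y hy i hi
    rw [(hb.1 ⟨x, hx, rfl⟩).2.2 i hi, (hb.1 ⟨y, hy, rfl⟩).2.2 i hi]
  have hsup : sSup A ∈ A := Nat.sSup_mem ⟨_, hmemβ⟩ hbdd
  have hge : β.edges.length ≤ sSup A := le_csSup hbdd hmemβ
  obtain ⟨x0, hx0⟩ := hcones α
  have hsh : f x0 ∈ Γ.shift := hf.1 x0 (hα hx0)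
  have hst : Γ.o (f x0 0) = β.start := (hb.1 ⟨x0, hx0, rfl⟩).2.1
  have hok : Γ.pathOk β.start (List.ofFn fun i : Fin (sSup A) => f x0 ↑i) := by
    have := pathOk_ofFn hsh (sSup A) 0
    simpa [hst] using this
  set γ : Γ.FinPath := ⟨β.start, _, hok⟩ with hγ
  have hsubγ : f '' Γ.cone α ⊆ Γ.cone γ := by
    rintro _ ⟨y, hy, rfl⟩
    refine ⟨hf.1 y (hα hy), (hb.1 ⟨y, hy, rfl⟩).2.1, ?_⟩
    intro i hilt
    have hm : i < sSup A := by simpa [hγ] using hilt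
    have := hsup y hy x0 hx0 i hm
    rw [this]
    simp [hγ, List.get_ofFn]
  have hle := (hb.2 γ hsubγ).2
  simp only [hγ, List.length_ofFn] at hle
  rw [hbl]
  omega

lemma cyl_open (x : ℕ → Γ.E) (m : ℕ) :
    IsOpen {y : ℕ → Γ.E | ∀ i < m, y i = x i} := by
  have : {y : ℕ → Γ.E | ∀ i < m, y i = x i} =
      ⋂ i ∈ Finset.range m, {y : ℕ → Γ.E | y i = x i} := by
    ext y; simp
  rw [this]
  refine isOpen_biInter_finset fun i _ => ?_
  show IsOpen ((fun y : ℕ → Γ.E => y i) ⁻¹' {x i})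
  exact (isOpen_discrete _).preimage (continuous_apply i)

lemma mem_nhds_cyl {x : ℕ → Γ.E} {U : Set (ℕ → Γ.E)} (hU : IsOpen U) (hx : x ∈ U) :
    ∃ m, {y : ℕ → Γ.E | ∀ i < m, y i = x i} ⊆ U := by
  obtain ⟨I, u, hu, hsub⟩ := isOpen_pi_iff.mp hU x hx
  refine ⟨(I.sup id) + 1, fun y hy => hsub ?_⟩
  intro i hi
  have h1 : y i = x i := hy i (by have := Finset.le_sup (f := id) hi; simp at this; omega)
  rw [h1]
  exact (hu i hi).2

lemma closed_shift (Γ : FinDigraph) : IsClosed Γ.shift := by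
  have : Γ.shift = ⋂ i : ℕ, (fun x : ℕ → Γ.E => (x i, x (i + 1))) ⁻¹'
      {p : Γ.E × Γ.E | Γ.t p.1 = Γ.o p.2} := by
    ext x; simp [FinDigraph.shift]
  rw [this]
  exact isClosed_iInter fun i => (isClosed_discrete _).preimage
    ((continuous_apply i).prodMk (continuous_apply (i + 1)))

lemma E_closed {E : Set (ℕ → Γ.E)} (hEsub : E ⊆ Γ.shift) (hEclopen : Γ.ClopenIn E) :
    IsClosed E := by
  have h2 : E = Subtype.val '' {x : ↥Γ.shift | (x : ℕ → Γ.E) ∈ E} := by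
    ext x
    constructor
    · intro hx; exact ⟨⟨x, hEsub hx⟩, hx, rfl⟩
    · rintro ⟨y, hy, rfl⟩; exact hy
  rw [h2]
  exact (closed_shift Γ).isClosedEmbedding_subtypeVal.isClosedMap _ hEclopen.isClosed

lemma unif {E : Set (ℕ → Γ.E)} (hEcl : IsClosed E) {f : (ℕ → Γ.E) → ℕ → Γ.E}
    (hfc : ContinuousOn f E) (n : ℕ) :
    ∃ m : ℕ, ∀ x ∈ E, ∀ y ∈ E, (∀ i < m, x i = y i) → ∀ i ≤ n, f x i = f y i := by
  have hcomp : IsCompact E := hEcl.isCompact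
  have key : ∀ x ∈ E, ∃ m : ℕ, ∀ y ∈ E, (∀ i < m, y i = x i) →
      ∀ i ≤ n, f y i = f x i := by
    intro x hx
    have hWeq : {z : ℕ → Γ.E | ∀ i ≤ n, z i = f x i} =
        {z : ℕ → Γ.E | ∀ i < n + 1, z i = f x i} := by
      ext z; simp [Nat.lt_succ_iff]
    have hW : IsOpen {z : ℕ → Γ.E | ∀ i ≤ n, z i = f x i} := by
      rw [hWeq]; exact cyl_open _ _
    have hmem : {z : ℕ → Γ.E | ∀ i ≤ n, z i = f x i} ∈ nhds (f x) :=
      hW.mem_nhds (by simp)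
    have hpre := (hfc x hx).preimage_mem_nhdsWithin hmem
    rw [mem_nhdsWithin] at hpre
    obtain ⟨U, hUo, hxU, hUsub⟩ := hpre
    obtain ⟨m, hm⟩ := mem_nhds_cyl hUo hxU
    exact ⟨m, fun y hy hagree => hUsub ⟨hm hagree, hy⟩⟩
  choose! M hM using key
  obtain ⟨F, hFsub, hFfin, hFcov⟩ := hcomp.elim_finite_subcover_image
      (b := E) (c := fun x => {y : ℕ → Γ.E | ∀ i < M x, y i = x i})
      (fun x _ => cyl_open x (M x))
      (fun y hy => Set.mem_biUnion hy (fun i hi => rfl))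
  refine ⟨hFfin.toFinset.sup M, ?_⟩
  intro x hx y hy hagree i hi
  obtain ⟨z, hzF, hxz⟩ := Set.mem_iUnion₂.mp (hFcov hx)
  have hMz : M z ≤ hFfin.toFinset.sup M :=
    Finset.le_sup (hFfin.mem_toFinset.mpr hzF)
  have hzE : z ∈ E := hFsub hzF
  have hyz : ∀ i < M z, y i = z i := by
    intro i hiz
    rw [← hagree i (by omega)]
    exact hxz i hiz
  rw [hM z hzE x hx hxz i hi, hM z hzE y hy hyz i hi]

lemma all_eq_of_cat_eq {v : Γ.V} {α α' : Γ.FinPath}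
    (hlen : α.edges.length < α'.edges.length)
    (H : ∀ ω ∈ Γ.cone (Γ.trivPath v), Γ.catPath α ω = Γ.catPath α' ω) :
    ∀ ω ∈ Γ.cone (Γ.trivPath v), ∀ ω' ∈ Γ.cone (Γ.trivPath v), ω = ω' := by
  set la := α.edges.length with hla
  set la' := α'.edges.length with hla'
  set d := la' - la with hd
  have hdpos : 0 < d := by omega
  have val : ∀ ω ∈ Γ.cone (Γ.trivPath v), ∀ j,
      ∀ h : la + j % d < la', ω j = α'.edges.get ⟨la + j % d, h⟩ := by
    intro ω hω j
    induction j using Nat.strong_induction_on with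
    | _ j ih =>
      intro h
      have Hω := H ω hω
      by_cases hj : j < d
      · have hcf := congrFun Hω (la + j)
        rw [catPath_apply, catPath_apply, dif_neg (by omega), dif_pos (by omega)] at hcf
        have e1 : la + j - la = j := by omega
        rw [e1] at hcf
        rw [hcf]
        congr 1
        ext
        simp [Nat.mod_eq_of_lt hj]
      · have hper := congrFun Hω (j - d + la')
        rw [catPath_apply, catPath_apply, dif_neg (by omega), dif_neg (by omega)] at hper
        have e1 : j - d + la' - la = j := by omega
        have e2 : j - d + la' - la' = j - d := by omega
        rw [e1, e2] at hper
        have hmod : (j - d) % d = j % d := (Nat.mod_eq_sub_mod (by omega)).symm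
        have := ih (j - d) (by omega) (by rw [hmod]; exact h)
        rw [hper, this]
        congr 1
        ext
        simp [hmod]
  intro ω hω ω' hω'
  funext j
  have hb : la + j % d < la' := by have := Nat.mod_lt j hdpos; omega
  rw [val ω hω j hb, val ω' hω' j hb]

lemma cone_singleton_absurd (hiso : Γ.NoIsolatedPoints) (hcones : Γ.NoEmptyCones)
    (v : Γ.V)
    (hsingle : ∀ ω ∈ Γ.cone (Γ.trivPath v), ∀ ω' ∈ Γ.cone (Γ.trivPath v), ω = ω') :
    False := by
  obtain ⟨ω₀, hω₀⟩ := hcones (Γ.trivPath v)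
  have hopen : IsOpen {x : ↥Γ.shift | Γ.o (x.val 0) = v} := by
    show IsOpen ((fun x : ↥Γ.shift => x.val 0) ⁻¹' {e : Γ.E | Γ.o e = v})
    exact (isOpen_discrete _).preimage
      ((continuous_apply 0).comp continuous_subtype_val)
  have heq : {x : ↥Γ.shift | Γ.o (x.val 0) = v} = {⟨ω₀, hω₀.1⟩} := by
    ext x
    simp only [Set.mem_setOf_eq, Set.mem_singleton_iff]
    constructor
    · intro hx
      have hxc : x.val ∈ Γ.cone (Γ.trivPath v) :=
        ⟨x.2, hx, by intro i hilt; simp [FinDigraph.trivPath] at hilt⟩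
      exact Subtype.ext (hsingle _ hxc _ hω₀)
    · rintro rfl
      exact hω₀.2.1
  exact hiso _ (heq ▸ hopen)

end BFT

/-- For a nondegenerate map `f : E → Σ_Γ`, the preimage under `f̄` of any finite path
`β` is finite; if moreover `f` is rational and injective with exactly `k` distinct
local actions, this preimage has at most `k` elements. -/
theorem bar_finite_to_one (Γ : FinDigraph)
    (hiso : Γ.NoIsolatedPoints) (hcones : Γ.NoEmptyCones)
    (E : Set (ℕ → Γ.E)) (hEsub : E ⊆ Γ.shift) (hEne : E.Nonempty)
    (hEclopen : Γ.ClopenIn E)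
    (f : (ℕ → Γ.E) → ℕ → Γ.E) (hfc : ContinuousOn f E) (hf : Γ.Nondegenerate f E)
    (β : Γ.FinPath) :
    {α : Γ.FinPath | Γ.cone α ⊆ E ∧ Γ.IsBar f α β}.Finite ∧
    ∀ k : ℕ, Set.InjOn f E →
      (Γ.localAction f '' {α : Γ.FinPath | Γ.cone α ⊆ E}).Finite →
      (Γ.localAction f '' {α : Γ.FinPath | Γ.cone α ⊆ E}).ncard = k →
      {α : Γ.FinPath | Γ.cone α ⊆ E ∧ Γ.IsBar f α β}.ncard ≤ k := by
  set S := {α : Γ.FinPath | Γ.cone α ⊆ E ∧ Γ.IsBar f α β} with hS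
  set L := β.edges.length with hL
  have hEcl : IsClosed E := BFT.E_closed hEsub hEclopen
  obtain ⟨m, hm⟩ := BFT.unif hEcl hfc L
  -- every α in S has length ≤ m
  have hlen : ∀ α ∈ S, α.edges.length ≤ m := by
    intro α hα
    by_contra hc
    push_neg at hc
    obtain ⟨x0, hx0⟩ := hcones α
    have hagree : ∀ y ∈ Γ.cone α, ∀ i ≤ L, f y i = f x0 i := by
      intro y hy i hi
      refine hm y (hα.1 hy) x0 (hα.1 hx0) ?_ i hi
      intro i him
      rw [hy.2.2 i (by omega), hx0.2.2 i (by omega)]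
    have hsh : f x0 ∈ Γ.shift := hf.1 x0 (hα.1 hx0)
    have hst : Γ.o (f x0 0) = β.start := (hα.2.1 ⟨x0, hx0, rfl⟩).2.1
    have hok : Γ.pathOk β.start (List.ofFn fun i : Fin (L + 1) => f x0 ↑i) := by
      have := BFT.pathOk_ofFn hsh (L + 1) 0
      simpa [hst] using this
    set γ : Γ.FinPath := ⟨β.start, _, hok⟩ with hγ
    have hsubγ : f '' Γ.cone α ⊆ Γ.cone γ := by
      rintro _ ⟨y, hy, rfl⟩
      refine ⟨hf.1 y (hα.1 hy), (hα.2.1 ⟨y, hy, rfl⟩).2.1, ?_⟩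
      intro i hilt
      have hi : i ≤ L := by
        have : i < L + 1 := by simpa [hγ] using hilt
        omega
      rw [hagree y hy i hi]
      show f x0 i = (List.ofFn fun i : Fin (L + 1) => f x0 ↑i).get ⟨i, hilt⟩
      rw [List.get_ofFn]
      simp
    have hle := (hα.2.2 γ hsubγ).2
    simp only [hγ, List.length_ofFn] at hle
    omega
  have hfin : S.Finite := by
    apply Set.Finite.of_finite_image (f := fun α : Γ.FinPath => (α.start, α.edges))
    · apply Set.Finite.subset
        (Set.Finite.prod Set.finite_univ (List.finite_length_lt Γ.E (m + 1)))
      rintro _ ⟨α, hα, rfl⟩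
      exact ⟨Set.mem_univ _, by have := hlen α hα; simp; omega⟩
    · intro a _ b _ h
      exact BFT.finpath_ext (congrArg Prod.fst h) (congrArg Prod.snd h)
  refine ⟨hfin, ?_⟩
  intro k hinj hfinIm hcard
  have hinjS : Set.InjOn (Γ.localAction f) S := by
    intro α hα α' hα' hloc
    have hv : Γ.pathEnd α = Γ.pathEnd α' := congrArg Prod.fst hloc
    have hbl : Γ.barLen f α = L := BFT.barLen_eq hcones hf hα.1 hα.2
    have hbl' : Γ.barLen f α' = L := BFT.barLen_eq hcones hf hα'.1 hα'.2
    have key : ∀ ω ∈ Γ.cone (Γ.trivPath (Γ.pathEnd α)),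
        Γ.catPath α ω = Γ.catPath α' ω := by
      intro ω hω
      have hω' : ω ∈ Γ.cone (Γ.trivPath (Γ.pathEnd α')) := hv ▸ hω
      have hx : Γ.catPath α ω ∈ Γ.cone α := BFT.catPath_mem_cone α hω
      have hx' : Γ.catPath α' ω ∈ Γ.cone α' := BFT.catPath_mem_cone α' hω'
      have hfeq : f (Γ.catPath α ω) = f (Γ.catPath α' ω) := by
        funext i
        by_cases hi : i < L
        · rw [(hα.2.1 ⟨_, hx, rfl⟩).2.2 i hi, (hα'.2.1 ⟨_, hx', rfl⟩).2.2 i hi]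
        · have h1 : (Γ.localAction f α).2 ω (i - L) =
              f (Γ.catPath α ω) ((i - L) + L) := by
            simp only [FinDigraph.localAction]
            rw [if_pos hω, hbl]
          have h2 : (Γ.localAction f α').2 ω (i - L) =
              f (Γ.catPath α' ω) ((i - L) + L) := by
            simp only [FinDigraph.localAction]
            rw [if_pos hω', hbl']
          have e : (i - L) + L = i := by omega
          rw [e] at h1 h2
          rw [← h1, ← h2, hloc]
      exact hinj (hα.1 hx) (hα'.1 hx') hfeq
    rcases Nat.lt_trichotomy α.edges.length α'.edges.length with hlt | heq | hgt
    · exact absurd (BFT.all_eq_of_cat_eq hlt key)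
        (by intro h; exact BFT.cone_singleton_absurd hiso hcones _ h)
    · have hedges : α.edges = α'.edges := by
        obtain ⟨ω, hω⟩ := hcones (Γ.trivPath (Γ.pathEnd α))
        refine List.ext_get heq ?_
        intro i h1 h2
        have hcf := congrFun (key ω hω) i
        rw [BFT.catPath_apply, BFT.catPath_apply, dif_pos h1, dif_pos h2] at hcf
        exact hcf
      have hstart : α.start = α'.start := by
        rcases Nat.eq_zero_or_pos α.edges.length with h0 | hpos
        · have ha : α.edges = [] := List.length_eq_zero_iff.mp h0
          have ha' : α'.edges = [] := hedges ▸ ha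
          rw [← BFT.pathEnd_of_nil ha, ← BFT.pathEnd_of_nil ha', hv]
        · obtain ⟨e, l, hel⟩ := List.exists_cons_of_ne_nil
            (List.length_pos_iff.mp hpos)
          have hel' : α'.edges = e :: l := hedges ▸ hel
          have k1 : Γ.o e = α.start := (BFT.pathOk_cons (hel ▸ α.ok)).1
          have k2 : Γ.o e = α'.start := (BFT.pathOk_cons (hel' ▸ α'.ok)).1
          rw [← k1, ← k2]
      exact BFT.finpath_ext hstart hedges
    · have key' : ∀ ω ∈ Γ.cone (Γ.trivPath (Γ.pathEnd α)),
          Γ.catPath α' ω = Γ.catPath α ω := fun ω hω => (key ω hω).symm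
      exact absurd (BFT.all_eq_of_cat_eq hgt key')
        (by intro h; exact BFT.cone_singleton_absurd hiso hcones _ h)
  calc S.ncard = (Γ.localAction f '' S).ncard :=
        (Set.ncard_image_of_injOn hinjS).symm
    _ ≤ k := by
        rw [← hcard]
        exact Set.ncard_le_ncard
          (Set.image_mono (fun α hα => hα.1)) hfinIm


end
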